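/- Relative consistency (intuitionistic): for a set of formulas Γ containing no occurrence of ∀, Γ ⊢_NK ⊥ if and only if Γ ⊢_NJ ⊥. -/
import Mathlib


/-- First-order terms: variables (de Bruijn style indices for bound variables
are merged with free variable indices) and function symbols with arguments. -/
inductive Term where
  | var : ℕ → Term
  | fn : ℕ → (ℕ → Term) → Term

/-- Lift (shift by one) all variables ≥ k. -/
def Term.lift (k : ℕ) : Term → Term
  | .var n => .var (if n < k then n else n + 1)
  | .fn f a => .fn f (fun i => (a i).lift k)

/-- Capture-avoiding substitution of the term `s` for variable `k` (de Bruijn). -/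
def Term.subst (k : ℕ) (s : Term) : Term → Term
  | .var n => if n < k then .var n else if n = k then s else .var (n - 1)
  | .fn f a => .fn f (fun i => Term.subst k s (a i))

/-- Free variables of a term. -/
def Term.fv : Term → Set ℕ
  | .var n => {n}
  | .fn _ a => ⋃ i, (a i).fv

/-- First-order formulas with primitive negation, de Bruijn binders. -/
inductive Formula where
  | pred : ℕ → (ℕ → Term) → Formula
  | bot : Formula
  | top : Formula
  | neg : Formula → Formula
  | conj : Formula → Formula → Formula
  | disj : Formula → Formula → Formula
  | impl : Formula → Formula → Formula
  | all : Formula → Formula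
  | ex : Formula → Formula

def Formula.lift (k : ℕ) : Formula → Formula
  | .pred r a => .pred r (fun i => (a i).lift k)
  | .bot => .bot
  | .top => .top
  | .neg A => .neg (A.lift k)
  | .conj A B => .conj (A.lift k) (B.lift k)
  | .disj A B => .disj (A.lift k) (B.lift k)
  | .impl A B => .impl (A.lift k) (B.lift k)
  | .all A => .all (A.lift (k + 1))
  | .ex A => .ex (A.lift (k + 1))

/-- Capture-avoiding substitution of term `s` for variable `k` in a formula. -/
def Formula.subst (k : ℕ) (s : Term) : Formula → Formula
  | .pred r a => .pred r (fun i => Term.subst k s (a i))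
  | .bot => .bot
  | .top => .top
  | .neg A => .neg (A.subst k s)
  | .conj A B => .conj (A.subst k s) (B.subst k s)
  | .disj A B => .disj (A.subst k s) (B.subst k s)
  | .impl A B => .impl (A.subst k s) (B.subst k s)
  | .all A => .all (A.subst (k + 1) (s.lift 0))
  | .ex A => .ex (A.subst (k + 1) (s.lift 0))

/-- Free variables of a formula. -/
def Formula.fv : Formula → Set ℕ
  | .pred _ a => ⋃ i, (a i).fv
  | .bot => ∅
  | .top => ∅
  | .neg A => A.fv
  | .conj A B => A.fv ∪ B.fv
  | .disj A B => A.fv ∪ B.fv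
  | .impl A B => A.fv ∪ B.fv
  | .all A => {n | n + 1 ∈ A.fv}
  | .ex A => {n | n + 1 ∈ A.fv}

/-- Object-level biconditional, as a defined connective. -/
def Formula.fIff (A B : Formula) : Formula := .conj (.impl A B) (.impl B A)

/-- `A` contains no occurrence of the universal quantifier ∀. -/
def Formula.forallFree : Formula → Prop
  | .pred _ _ => True
  | .bot => True
  | .top => True
  | .neg A => A.forallFree
  | .conj A B => A.forallFree ∧ B.forallFree
  | .disj A B => A.forallFree ∧ B.forallFree
  | .impl A B => A.forallFree ∧ B.forallFree
  | .all _ => False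
  | .ex A => A.forallFree

/-- `A` contains no occurrence of implication →. -/
def Formula.impFree : Formula → Prop
  | .pred _ _ => True
  | .bot => True
  | .top => True
  | .neg A => A.impFree
  | .conj A B => A.impFree ∧ B.impFree
  | .disj A B => A.impFree ∧ B.impFree
  | .impl _ _ => False
  | .all A => A.impFree
  | .ex A => A.impFree

/-- The minimal translation (·)^m. -/
def Formula.mtr : Formula → Formula
  | .pred r a => .pred r a
  | .bot => .bot
  | .top => .top
  | .neg A => .neg A.mtr
  | .conj A B => .conj A.mtr B.mtr
  | .disj A B => .disj A.mtr B.mtr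
  | .impl A B => .disj (.neg A.mtr) B.mtr
  | .all A => .neg (.ex (.neg A.mtr))
  | .ex A => .ex A.mtr

/-- The intuitionistic translation (·)^j. -/
def Formula.jtr : Formula → Formula
  | .pred r a => .pred r a
  | .bot => .bot
  | .top => .top
  | .neg A => .neg A.jtr
  | .conj A B => .conj A.jtr B.jtr
  | .disj A B => .disj A.jtr B.jtr
  | .impl A B => .impl A.jtr B.jtr
  | .all A => .neg (.ex (.neg A.jtr))
  | .ex A => .ex A.jtr

/-- Negative formulas: built from negated atoms, ⊥, ⊤ using only ¬, ∧, →, ∀. -/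
inductive Formula.Negative : Formula → Prop where
  | negAtom : ∀ r a, Formula.Negative (.neg (.pred r a))
  | bot : Formula.Negative .bot
  | top : Formula.Negative .top
  | neg : ∀ {A}, Formula.Negative A → Formula.Negative (.neg A)
  | conj : ∀ {A B}, Formula.Negative A → Formula.Negative B → Formula.Negative (.conj A B)
  | impl : ∀ {A B}, Formula.Negative A → Formula.Negative B → Formula.Negative (.impl A B)
  | all : ∀ {A}, Formula.Negative A → Formula.Negative (.all A)

/-- Natural deduction derivability; the flags `efq`, `raa` tell whether the
ex falso quodlibet and reductio ad absurdum rules are available.  `Deriv efq raa Γ A`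
means `A` is derivable with undischarged assumptions among `Γ`. -/
inductive Deriv (efq raa : Bool) : Set Formula → Formula → Prop where
  | hyp : ∀ {Γ A}, A ∈ Γ → Deriv efq raa Γ A
  | topI : ∀ {Γ}, Deriv efq raa Γ .top
  | negI : ∀ {Γ A}, Deriv efq raa (insert A Γ) .bot → Deriv efq raa Γ (.neg A)
  | negE : ∀ {Γ A}, Deriv efq raa Γ (.neg A) → Deriv efq raa Γ A → Deriv efq raa Γ .bot
  | conjI : ∀ {Γ A B}, Deriv efq raa Γ A → Deriv efq raa Γ B → Deriv efq raa Γ (.conj A B)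
  | conjE1 : ∀ {Γ A B}, Deriv efq raa Γ (.conj A B) → Deriv efq raa Γ A
  | conjE2 : ∀ {Γ A B}, Deriv efq raa Γ (.conj A B) → Deriv efq raa Γ B
  | disjI1 : ∀ {Γ A B}, Deriv efq raa Γ A → Deriv efq raa Γ (.disj A B)
  | disjI2 : ∀ {Γ A B}, Deriv efq raa Γ B → Deriv efq raa Γ (.disj A B)
  | disjE : ∀ {Γ A B C}, Deriv efq raa Γ (.disj A B) → Deriv efq raa (insert A Γ) C →
      Deriv efq raa (insert B Γ) C → Deriv efq raa Γ C
  | implI : ∀ {Γ A B}, Deriv efq raa (insert A Γ) B → Deriv efq raa Γ (.impl A B)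
  | implE : ∀ {Γ A B}, Deriv efq raa Γ (.impl A B) → Deriv efq raa Γ A → Deriv efq raa Γ B
  | allI : ∀ {Γ A}, Deriv efq raa (Formula.lift 0 '' Γ) A → Deriv efq raa Γ (.all A)
  | allE : ∀ {Γ A} (t : Term), Deriv efq raa Γ (.all A) → Deriv efq raa Γ (A.subst 0 t)
  | exI : ∀ {Γ A} (t : Term), Deriv efq raa Γ (A.subst 0 t) → Deriv efq raa Γ (.ex A)
  | exE : ∀ {Γ A C}, Deriv efq raa Γ (.ex A) →
      Deriv efq raa (insert A (Formula.lift 0 '' Γ)) (C.lift 0) → Deriv efq raa Γ C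
  | efqR : ∀ {Γ A}, efq = true → Deriv efq raa Γ .bot → Deriv efq raa Γ A
  | raaR : ∀ {Γ A}, raa = true → Deriv efq raa (insert (.neg A) Γ) .bot → Deriv efq raa Γ A

/-- Minimal natural deduction. -/
def NM : Set Formula → Formula → Prop := Deriv false false
/-- Intuitionistic natural deduction. -/
def NJ : Set Formula → Formula → Prop := Deriv true false
/-- Classical natural deduction (minimal + reductio ad absurdum). -/
def NK : Set Formula → Formula → Prop := Deriv false true

/-! ### Auxiliary lemmas -/

theorem Deriv.weaken {e r : Bool} {Γ Δ : Set Formula} {A : Formula}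
    (d : Deriv e r Γ A) (h : Γ ⊆ Δ) : Deriv e r Δ A := by
  induction d generalizing Δ with
  | hyp hA => exact .hyp (h hA)
  | topI => exact .topI
  | negI _ ih => exact .negI (ih (Set.insert_subset_insert h))
  | negE _ _ ih1 ih2 => exact .negE (ih1 h) (ih2 h)
  | conjI _ _ ih1 ih2 => exact .conjI (ih1 h) (ih2 h)
  | conjE1 _ ih => exact .conjE1 (ih h)
  | conjE2 _ ih => exact .conjE2 (ih h)
  | disjI1 _ ih => exact .disjI1 (ih h)
  | disjI2 _ ih => exact .disjI2 (ih h)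
  | disjE _ _ _ ih ihA ihB =>
      exact .disjE (ih h) (ihA (Set.insert_subset_insert h)) (ihB (Set.insert_subset_insert h))
  | implI _ ih => exact .implI (ih (Set.insert_subset_insert h))
  | implE _ _ ih1 ih2 => exact .implE (ih1 h) (ih2 h)
  | allI _ ih => exact .allI (ih (Set.image_mono h))
  | allE t _ ih => exact .allE t (ih h)
  | exI t _ ih => exact .exI t (ih h)
  | exE _ _ ih1 ih2 =>
      exact .exE (ih1 h) (ih2 (Set.insert_subset_insert (Set.image_mono h)))
  | efqR he _ ih => exact .efqR he (ih h)
  | raaR hr _ ih => exact .raaR hr (ih (Set.insert_subset_insert h))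

/-- Double negation, abbreviation. -/
def nn (A : Formula) : Formula := .neg (.neg A)

theorem dni {e r : Bool} {Γ : Set Formula} {A : Formula}
    (d : Deriv e r Γ A) : Deriv e r Γ (nn A) :=
  .negI (.negE (.hyp (Set.mem_insert _ _)) (d.weaken (Set.subset_insert _ _)))

theorem nn_bot {e r : Bool} {Γ : Set Formula}
    (d : Deriv e r Γ (nn .bot)) : Deriv e r Γ .bot :=
  .negE d (.negI (.hyp (Set.mem_insert _ _)))

theorem tne {e r : Bool} {Γ : Set Formula} {A : Formula}
    (d : Deriv e r Γ (nn (.neg A))) : Deriv e r Γ (.neg A) :=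
  .negI (.negE (d.weaken (Set.subset_insert _ _)) (dni (.hyp (Set.mem_insert _ _))))

theorem nn_bind {e r : Bool} {Γ : Set Formula} {A C : Formula}
    (h1 : Deriv e r Γ (nn A)) (h2 : Deriv e r (insert A Γ) (nn C)) :
    Deriv e r Γ (nn C) := by
  apply Deriv.negI
  refine Deriv.negE (h1.weaken (Set.subset_insert _ _)) (Deriv.negI ?_)
  exact Deriv.negE (h2.weaken (Set.insert_subset_insert (Set.subset_insert _ _)))
    (.hyp (Set.mem_insert_of_mem _ (Set.mem_insert _ _)))

theorem jtr_lift (A : Formula) : ∀ k, (A.lift k).jtr = A.jtr.lift k := by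
  induction A <;> intro k <;> simp [Formula.lift, Formula.jtr, *]

theorem jtr_subst (A : Formula) : ∀ k s, (A.subst k s).jtr = A.jtr.subst k s := by
  induction A <;> intro k s <;> simp [Formula.subst, Formula.jtr, *]

theorem jtr_eq_self {A : Formula} (h : A.forallFree) : A.jtr = A := by
  induction A <;> simp_all [Formula.forallFree, Formula.jtr]

theorem jtr_image_lift (Γ : Set Formula) :
    Formula.jtr '' (Formula.lift 0 '' Γ) = Formula.lift 0 '' (Formula.jtr '' Γ) := by
  rw [← Set.image_comp, ← Set.image_comp]
  exact Set.image_congr fun B _ => jtr_lift B 0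

/-- Glivenko-style theorem via the translation `jtr`. -/
theorem glivenko {e r : Bool} {Γ : Set Formula} {A : Formula} (d : Deriv e r Γ A) :
    Deriv true false (Formula.jtr '' Γ) (nn A.jtr) := by
  induction d with
  | hyp hA => exact dni (.hyp (Set.mem_image_of_mem _ hA))
  | topI => exact dni .topI
  | negI _ ih =>
      rw [Set.image_insert_eq] at ih
      exact dni (.negI (nn_bot ih))
  | negE _ _ ih1 ih2 =>
      exact nn_bind ih1 (nn_bind (ih2.weaken (Set.subset_insert _ _))
        (dni (.negE (.hyp (Set.mem_insert_of_mem _ (Set.mem_insert _ _)))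
          (.hyp (Set.mem_insert _ _)))))
  | conjI _ _ ih1 ih2 =>
      exact nn_bind ih1 (nn_bind (ih2.weaken (Set.subset_insert _ _))
        (dni (.conjI (.hyp (Set.mem_insert_of_mem _ (Set.mem_insert _ _)))
          (.hyp (Set.mem_insert _ _)))))
  | conjE1 _ ih => exact nn_bind ih (dni (.conjE1 (.hyp (Set.mem_insert _ _))))
  | conjE2 _ ih => exact nn_bind ih (dni (.conjE2 (.hyp (Set.mem_insert _ _))))
  | disjI1 _ ih => exact nn_bind ih (dni (.disjI1 (.hyp (Set.mem_insert _ _))))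
  | disjI2 _ ih => exact nn_bind ih (dni (.disjI2 (.hyp (Set.mem_insert _ _))))
  | disjE _ _ _ ih ihA ihB =>
      rw [Set.image_insert_eq] at ihA ihB
      exact nn_bind ih (.disjE (.hyp (Set.mem_insert _ _))
        (ihA.weaken (Set.insert_subset_insert (Set.subset_insert _ _)))
        (ihB.weaken (Set.insert_subset_insert (Set.subset_insert _ _))))
  | @implI Γ₀ A₀ B₀ _ ih =>
      rw [Set.image_insert_eq] at ih
      apply Deriv.negI
      set Γ' := Formula.jtr '' Γ₀ with hΓ'
      set Δ : Set Formula := insert (Formula.neg (.impl A₀.jtr B₀.jtr)) Γ' with hΔ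
      have hnB : Deriv true false Δ (Formula.neg B₀.jtr) :=
        .negI (.negE (.hyp (Set.mem_insert_of_mem _ (Set.mem_insert _ _)))
          (.implI (.hyp (Set.mem_insert_of_mem _ (Set.mem_insert _ _)))))
      have hnA : Deriv true false Δ (Formula.neg A₀.jtr) :=
        .negI (.negE (ih.weaken (Set.insert_subset_insert (Set.subset_insert _ _)))
          (hnB.weaken (Set.subset_insert _ _)))
      exact .negE (.hyp (Set.mem_insert _ _))
        (.implI (.efqR rfl (.negE (hnA.weaken (Set.subset_insert _ _))
          (.hyp (Set.mem_insert _ _)))))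
  | implE _ _ ih1 ih2 =>
      exact nn_bind ih1 (nn_bind (ih2.weaken (Set.subset_insert _ _))
        (dni (.implE (.hyp (Set.mem_insert_of_mem _ (Set.mem_insert _ _)))
          (.hyp (Set.mem_insert _ _)))))
  | allI _ ih =>
      rw [jtr_image_lift] at ih
      refine dni (.negI (.exE (.hyp (Set.mem_insert _ _)) ?_))
      exact .negE
        (ih.weaken ((Set.image_mono (Set.subset_insert _ _)).trans (Set.subset_insert _ _)))
        (.hyp (Set.mem_insert _ _))
  | allE t _ ih =>
      rw [jtr_subst]
      exact .negI (.negE ((tne ih).weaken (Set.subset_insert _ _))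
        (.exI t (.hyp (Set.mem_insert _ _))))
  | exI t _ ih =>
      rw [jtr_subst] at ih
      exact nn_bind ih (dni (.exI t (.hyp (Set.mem_insert _ _))))
  | exE _ _ ih1 ih2 =>
      rw [Set.image_insert_eq, jtr_image_lift, jtr_lift] at ih2
      apply Deriv.negI
      refine Deriv.negE (ih1.weaken (Set.subset_insert _ _)) (Deriv.negI ?_)
      refine Deriv.exE (Deriv.hyp (Set.mem_insert _ _)) ?_
      refine Deriv.negE
        (ih2.weaken (Set.insert_subset_insert (Set.image_mono
          ((Set.subset_insert _ _).trans (Set.subset_insert _ _))))) ?_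
      exact .hyp (Set.mem_insert_of_mem _ (Set.mem_image_of_mem _
        (Set.mem_insert_of_mem _ (Set.mem_insert _ _))))
  | efqR _ _ ih => exact .efqR rfl (nn_bot ih)
  | raaR _ _ ih =>
      rw [Set.image_insert_eq] at ih
      exact .negI (nn_bot ih)

theorem toNK {Γ : Set Formula} {A : Formula} (d : Deriv true false Γ A) :
    Deriv false true Γ A := by
  induction d with
  | hyp hA => exact .hyp hA
  | topI => exact .topI
  | negI _ ih => exact .negI ih
  | negE _ _ ih1 ih2 => exact .negE ih1 ih2
  | conjI _ _ ih1 ih2 => exact .conjI ih1 ih2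
  | conjE1 _ ih => exact .conjE1 ih
  | conjE2 _ ih => exact .conjE2 ih
  | disjI1 _ ih => exact .disjI1 ih
  | disjI2 _ ih => exact .disjI2 ih
  | disjE _ _ _ ih ihA ihB => exact .disjE ih ihA ihB
  | implI _ ih => exact .implI ih
  | implE _ _ ih1 ih2 => exact .implE ih1 ih2
  | allI _ ih => exact .allI ih
  | allE t _ ih => exact .allE t ih
  | exI t _ ih => exact .exI t ih
  | exE _ _ ih1 ih2 => exact .exE ih1 ih2
  | efqR _ _ ih => exact .raaR rfl (ih.weaken (Set.subset_insert _ _))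
  | raaR hr _ _ => exact absurd hr (by simp)

/-- Relative consistency, intuitionistic version. -/
theorem relative_consistency_intuitionistic (Γ : Set Formula)
    (hΓ : ∀ B ∈ Γ, B.forallFree) :
    NK Γ .bot ↔ NJ Γ .bot := by
  constructor
  · intro h
    have hg := glivenko h
    have himg : Formula.jtr '' Γ = Γ := by
      rw [Set.image_congr (fun B hB => jtr_eq_self (hΓ B hB)), Set.image_id']
    rw [himg] at hg
    exact nn_bot hg
  · intro h
    exact toNK h
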